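/- arXiv:math/0611676 — 6 statements merged into one kernel-verified Lean document; each statement's English description precedes it below -/
import Mathlib

section
/- For the symmetric case p = 1/2, the function W(i) = (1/3)(N-i)(N+i) satisfies the system: W(1) = 1 + W(2); W(i) = 1 + ((i+1)/(2i))·W(i+1) + ((i-1)/(2i))·W(i-1) for 2 ≤ i ≤ N-1; and W(N) = 0. -/
theorem stmt_6 (N : ℕ) (W : ℕ → ℝ)
    (hW : ∀ i, W i = (1/3) * ((N : ℝ) - i) * ((N : ℝ) + i)) :
    W 1 = 1 + W 2 ∧
    (∀ i, 2 ≤ i → i ≤ N - 1 →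
      W i = 1 + (((i : ℝ) + 1) / (2 * i)) * W (i+1) + (((i : ℝ) - 1) / (2 * i)) * W (i-1)) ∧
    W N = 0 := by
  refine ⟨?_, ?_, ?_⟩
  · rw [hW, hW]; push_cast; ring
  · intro i h2 _
    have hi1 : (1:ℕ) ≤ i := le_trans (by norm_num) h2
    rw [hW, hW, hW]
    have : ((i - 1 : ℕ) : ℝ) = (i : ℝ) - 1 := by
      push_cast [hi1]; ring
    rw [this]
    have hi : (i : ℝ) ≠ 0 := by positivity
    push_cast
    field_simp
    ring
  · rw [hW]; ring
end

section
/- For r ≠ 1, r > 0, the function W(i) = ((r+1)/(r-1))·[N·(r^N+1)/(r^N-1) - i·(r^i+1)/(r^i-1)] satisfies: W(1) = 1 + W(2); W(i) = 1 + (1/(r+1))·((r^{i+1}-1)/(r^i-1))·W(i+1) + (r/(r+1))·((r^{i-1}-1)/(r^i-1))·W(i-1) for 2 ≤ i ≤ N-1; and W(N) = 0. -/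
theorem stmt_7 (r : ℝ) (hr : 0 < r) (hr1 : r ≠ 1) (N : ℕ) (W : ℕ → ℝ)
    (hW : ∀ i, W i = (r + 1) / (r - 1) *
      ((N : ℝ) * (r ^ N + 1) / (r ^ N - 1) - (i : ℝ) * (r ^ i + 1) / (r ^ i - 1))) :
    W 1 = 1 + W 2 ∧
    (∀ i, 2 ≤ i → i ≤ N - 1 →
      W i = 1 + (1 / (r + 1)) * ((r ^ (i+1) - 1) / (r ^ i - 1)) * W (i+1)
              + (r / (r + 1)) * ((r ^ (i-1) - 1) / (r ^ i - 1)) * W (i-1)) ∧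
    W N = 0 := by
  have hr1' : r - 1 ≠ 0 := sub_ne_zero.mpr hr1
  have hrp1 : r + 1 ≠ 0 := by positivity
  have hpow : ∀ m : ℕ, 1 ≤ m → r ^ m - 1 ≠ 0 := by
    intro m hm
    rcases lt_or_gt_of_ne hr1 with h | h
    · have : r ^ m < 1 := pow_lt_one₀ hr.le h (by omega)
      linarith
    · have : 1 < r ^ m := one_lt_pow₀ h (by omega)
      linarith
  refine ⟨?_, ?_, ?_⟩
  · rw [hW 1, hW 2]
    have h1 := hpow 1 le_rfl
    have h2 := hpow 2 one_le_two
    field_simp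
    ring
  · intro i h2i hiN
    obtain ⟨k, rfl⟩ : ∃ k, i = k + 2 := ⟨i - 2, by omega⟩
    have := hpow (k + 1) (by omega)
    have := hpow (k + 2) (by omega)
    have := hpow (k + 3) (by omega)
    have e1 : k + 2 + 1 = k + 3 := by omega
    have e2 : k + 2 - 1 = k + 1 := by omega
    rw [e1, e2, hW (k + 2), hW (k + 3), hW (k + 1)]
    push_cast
    field_simp
    ring
  · rw [hW N]
    ring
end

section
/- For r ≠ 1, r > 0, 0 < i < N, the total-expectation identity E(i) = P(i)·W(i) + (1 - P(i))·B(i) holds, where P(i) = (r^i-1)/(r^N-1), E(i) = ((r+1)/(r-1))·(i - N·P(i)), W(i) = ((r+1)/(r-1))·[N·(r^N+1)/(r^N-1) - i·(r^i+1)/(r^i-1)], and B(i) = ((r+1)/(r-1))·[N·(r^N+1)/(r^N-1) - (N-i)·(r^{N-i}+1)/(r^{N-i}-1)]. -/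
lemma pow_ne_one_aux (r : ℝ) (hr : 0 < r) (hr1 : r ≠ 1) (k : ℕ) (hk : 0 < k) :
    r ^ k ≠ 1 := by
  rcases lt_or_gt_of_ne hr1 with h | h
  · exact ne_of_lt (pow_lt_one₀ hr.le h hk.ne')
  · exact ne_of_gt (one_lt_pow₀ h hk.ne')

theorem stmt_9 (r : ℝ) (hr : 0 < r) (hr1 : r ≠ 1) (N i : ℕ) (h1 : 0 < i) (h2 : i < N)
    (P E W B : ℝ)
    (hP : P = (r ^ i - 1) / (r ^ N - 1))
    (hE : E = (r + 1) / (r - 1) * ((i : ℝ) - (N : ℝ) * P))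
    (hW : W = (r + 1) / (r - 1) *
      ((N : ℝ) * (r ^ N + 1) / (r ^ N - 1) - (i : ℝ) * (r ^ i + 1) / (r ^ i - 1)))
    (hB : B = (r + 1) / (r - 1) *
      ((N : ℝ) * (r ^ N + 1) / (r ^ N - 1)
        - ((N : ℝ) - i) * (r ^ (N - i) + 1) / (r ^ (N - i) - 1))) :
    E = P * W + (1 - P) * B := by
  have hi1 : r ^ i - 1 ≠ 0 := sub_ne_zero.mpr (pow_ne_one_aux r hr hr1 i h1)
  have hN1 : r ^ N - 1 ≠ 0 := sub_ne_zero.mpr (pow_ne_one_aux r hr hr1 N (h1.trans h2))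
  have hNi1 : r ^ (N - i) - 1 ≠ 0 :=
    sub_ne_zero.mpr (pow_ne_one_aux r hr hr1 (N - i) (Nat.sub_pos_of_lt h2))
  have hr0 : r - 1 ≠ 0 := sub_ne_zero.mpr hr1
  have hri : (r : ℝ) ^ i ≠ 0 := pow_ne_zero _ hr.ne'
  have hsub : r ^ (N - i) = r ^ N / r ^ i := pow_sub₀ r hr.ne' h2.le
  have hNi : ((N - i : ℕ) : ℝ) = (N : ℝ) - i := by
    push_cast [Nat.cast_sub h2.le]; ring
  rw [hsub] at hNi1 hB
  have hne : r ^ N - r ^ i ≠ 0 := by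
    intro h
    apply hNi1
    field_simp
    linarith [sub_eq_zero.mp h]
  subst hP hE hW hB
  field_simp
  ring
end

section
/- For r ≠ 1, r > 0, the probability of covering all vertices before returning to the origin, P{A} = ((r-1)/(r+1))·(r^m+1)/(r^m-1), is strictly greater than 1/m for every m ≥ 2, and its limit as r → 1 equals 1/m. -/
open Finset Filter

private lemma aux_pos (r : ℝ) (hr : 0 < r) (hr1 : r ≠ 1) {k l : ℕ} (hk : 1 ≤ k) (hl : 1 ≤ l) :
    0 < (1 - r ^ k) * (1 - r ^ l) := by
  rcases lt_or_gt_of_ne hr1 with h | h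
  · have hk' : r ^ k < 1 := pow_lt_one₀ hr.le h (by omega)
    have hl' : r ^ l < 1 := pow_lt_one₀ hr.le h (by omega)
    nlinarith
  · have hk' : 1 < r ^ k := one_lt_pow₀ h (by omega)
    have hl' : 1 < r ^ l := one_lt_pow₀ h (by omega)
    nlinarith

private lemma key_ineq (m : ℕ) (hm : 2 ≤ m) (r : ℝ) (hr : 0 < r) (hr1 : r ≠ 1) :
    (r + 1) * (∑ j ∈ range m, r ^ j) < m * (r ^ m + 1) := by
  set S : ℝ := ∑ j ∈ range m, r ^ j with hSdef
  have hgeom : (r - 1) * S = r ^ m - 1 := by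
    rw [hSdef, mul_comm]; exact geom_sum_mul r m
  set T : ℝ := ∑ j ∈ range (m - 1), r ^ (j + 1) with hTdef
  have hST : S = 1 + T := by
    rw [hSdef, hTdef]
    have : m = (m - 1) + 1 := by omega
    rw [this, Finset.sum_range_succ']
    simp [add_comm]
  have hsum : 0 < ∑ j ∈ range (m - 1), (1 - r ^ (j + 1)) * (1 - r ^ (m - 1 - j)) := by
    apply Finset.sum_pos
    · intro j hj
      have hj' : j < m - 1 := Finset.mem_range.mp hj
      exact aux_pos r hr hr1 (by omega) (by omega)
    · exact Finset.nonempty_range_iff.mpr (by omega)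
  have hexpand : ∑ j ∈ range (m - 1), (1 - r ^ (j + 1)) * (1 - r ^ (m - 1 - j))
      = (m - 1 : ℝ) * (1 + r ^ m) - 2 * T := by
    have h1 : ∀ j ∈ range (m - 1), (1 - r ^ (j + 1)) * (1 - r ^ (m - 1 - j))
        = 1 + r ^ m - r ^ (j + 1) - r ^ (m - 1 - j) := by
      intro j hj
      have hj' : j < m - 1 := Finset.mem_range.mp hj
      have : r ^ (j + 1) * r ^ (m - 1 - j) = r ^ m := by
        rw [← pow_add]; congr 1; omega
      linear_combination this
    rw [Finset.sum_congr rfl h1]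
    have hrefl : ∑ j ∈ range (m - 1), r ^ (m - 1 - j) = ∑ j ∈ range (m - 1), r ^ (j + 1) := by
      rw [← Finset.sum_range_reflect]
      apply Finset.sum_congr rfl
      intro j hj
      have hj' : j < m - 1 := Finset.mem_range.mp hj
      congr 1
      omega
    simp only [Finset.sum_sub_distrib, Finset.sum_add_distrib, Finset.sum_const,
      Finset.card_range, nsmul_eq_mul, hrefl]
    have : ((m - 1 : ℕ) : ℝ) = (m : ℝ) - 1 := by
      have : (1:ℕ) ≤ m := by omega
      push_cast [this]; ring
    rw [this, ← hTdef]; ring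
  have hm' : (2 : ℝ) ≤ (m : ℝ) := by exact_mod_cast hm
  nlinarith [hsum, hexpand, hgeom, hST]

private lemma f_eq (m : ℕ) (hm : 2 ≤ m) (r : ℝ) (hr : 0 < r) (hr1 : r ≠ 1) :
    ((r - 1) / (r + 1)) * (r ^ m + 1) / (r ^ m - 1)
      = (r ^ m + 1) / ((r + 1) * ∑ j ∈ range m, r ^ j) := by
  set S : ℝ := ∑ j ∈ range m, r ^ j with hSdef
  have hSpos : 0 < S := by
    apply Finset.sum_pos (fun j _ => pow_pos hr j)
    exact Finset.nonempty_range_iff.mpr (by omega)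
  have hgeom : r ^ m - 1 = (r - 1) * S := by
    rw [hSdef, mul_comm]; exact (geom_sum_mul r m).symm
  have h1 : r - 1 ≠ 0 := sub_ne_zero.mpr hr1
  have h2 : r + 1 ≠ 0 := by positivity
  rw [hgeom]
  field_simp

theorem stmt_13 (m : ℕ) (hm : 2 ≤ m) :
    (∀ r : ℝ, 0 < r → r ≠ 1 →
      ((r - 1) / (r + 1)) * (r ^ m + 1) / (r ^ m - 1) > 1 / m) ∧
    Filter.Tendsto (fun r : ℝ => ((r - 1) / (r + 1)) * (r ^ m + 1) / (r ^ m - 1))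
      (nhdsWithin 1 {1}ᶜ) (nhds (1 / m)) := by
  have hmR : (0 : ℝ) < (m : ℝ) := by exact_mod_cast (by omega : 0 < m)
  constructor
  · intro r hr hr1
    have hSpos : 0 < ∑ j ∈ range m, r ^ j := by
      apply Finset.sum_pos (fun j _ => pow_pos hr j)
      exact Finset.nonempty_range_iff.mpr (by omega)
    have hden : 0 < (r + 1) * ∑ j ∈ range m, r ^ j := by positivity
    rw [f_eq m hm r hr hr1, gt_iff_lt, div_lt_div_iff₀ hmR hden]
    calc 1 * ((r + 1) * ∑ j ∈ range m, r ^ j) = (r + 1) * ∑ j ∈ range m, r ^ j := by ring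
    _ < m * (r ^ m + 1) := key_ineq m hm r hr hr1
    _ = (r ^ m + 1) * m := by ring
  · have hg : Tendsto (fun r : ℝ => (r ^ m + 1) / ((r + 1) * ∑ j ∈ range m, r ^ j))
        (nhds 1) (nhds (1 / m)) := by
      have hc : ContinuousAt (fun r : ℝ => (r ^ m + 1) / ((r + 1) * ∑ j ∈ range m, r ^ j)) 1 := by
        apply ContinuousAt.div
        · fun_prop
        · fun_prop
        · simp
          positivity
      have hm0 : (m:ℝ) ≠ 0 := by exact_mod_cast (by omega : m ≠ 0)
      have h := hc.tendsto
      simp only [one_pow, Finset.sum_const, Finset.card_range, nsmul_eq_mul, mul_one] at h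
      rw [show ((1:ℝ)+1)/(((1:ℝ)+1)*(m:ℝ)) = 1/m by
        rw [div_eq_div_iff (by positivity) hm0]; ring] at h
      exact h
    have hg' : Tendsto (fun r : ℝ => (r ^ m + 1) / ((r + 1) * ∑ j ∈ range m, r ^ j))
        (nhdsWithin 1 {1}ᶜ) (nhds (1 / m)) := hg.mono_left nhdsWithin_le_nhds
    apply hg'.congr'
    have hpos : ∀ᶠ r : ℝ in nhdsWithin 1 {1}ᶜ, 0 < r :=
      (eventually_gt_nhds (by norm_num : (0:ℝ) < 1)).filter_mono nhdsWithin_le_nhds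
    have hne : ∀ᶠ r : ℝ in nhdsWithin 1 {1}ᶜ, r ≠ 1 := by
      filter_upwards [self_mem_nhdsWithin] with r hr
      exact hr
    filter_upwards [hpos, hne] with r hr hr1
    exact (f_eq m hm r hr hr1).symm
end

section
/- For r ≠ 1, r > 0, the weighted sum ∑_{i=1}^{m} P{L_i}·v_i equals ((r+1)/(r-1))·[m - 1/(r-1) - m²/(r^m - 1) + (m+1)²/(r^{m+1} - 1)], where P{L_i} = r^{m-i}(r-1)/(r^m-1) and v_i = ((r+1)/(r-1))·[m + i - 1 - 2/(r-1) + 2m/(r^m-1) - (m+1)(r^i-1)/(r^{m+1}-1)]. -/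
open Finset

lemma S0_succ (r : ℝ) (m : ℕ) :
    ∑ i ∈ Icc 1 (m+1), r ^ (m+1-i) = r * ∑ i ∈ Icc 1 m, r ^ (m-i) + 1 := by
  rw [Finset.sum_Icc_succ_top (by omega), Finset.mul_sum]
  simp only [Nat.sub_self, pow_zero]
  congr 1
  apply Finset.sum_congr rfl
  intro i hi
  simp only [Finset.mem_Icc] at hi
  rw [show m + 1 - i = (m - i) + 1 by omega, pow_succ]
  ring

lemma S1_succ (r : ℝ) (m : ℕ) :
    ∑ i ∈ Icc 1 (m+1), (i:ℝ) * r ^ (m+1-i)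
      = r * ∑ i ∈ Icc 1 m, (i:ℝ) * r ^ (m-i) + (m+1) := by
  rw [Finset.sum_Icc_succ_top (by omega), Finset.mul_sum]
  simp only [Nat.sub_self, pow_zero, mul_one]
  push_cast
  congr 1
  apply Finset.sum_congr rfl
  intro i hi
  simp only [Finset.mem_Icc] at hi
  rw [show m + 1 - i = (m - i) + 1 by omega, pow_succ]
  ring

lemma S0_eq (r : ℝ) (m : ℕ) :
    (r - 1) * ∑ i ∈ Icc 1 m, r ^ (m-i) = r ^ m - 1 := by
  induction m with
  | zero => simp
  | succ n ih => rw [S0_succ, pow_succ]; linear_combination r * ih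

lemma S1_eq (r : ℝ) (m : ℕ) :
    (r - 1)^2 * ∑ i ∈ Icc 1 m, (i:ℝ) * r ^ (m-i)
      = r ^ (m+1) - (m+1) * r + m := by
  induction m with
  | zero => simp
  | succ n ih =>
    rw [S1_succ]
    push_cast
    rw [show n + 1 + 1 = (n+1) + 1 from rfl]
    rw [pow_succ r (n+1)]
    linear_combination r * ih

lemma pow_ne_one (r : ℝ) (hr : 0 < r) (hr1 : r ≠ 1) (n : ℕ) (hn : n ≠ 0) :
    r ^ n ≠ 1 := by
  rcases lt_or_gt_of_ne hr1 with h | h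
  · exact ne_of_lt (pow_lt_one₀ hr.le h hn)
  · exact ne_of_gt (one_lt_pow₀ h hn)

theorem stmt_18 (r : ℝ) (hr : 0 < r) (hr1 : r ≠ 1) (m : ℕ) (hm : 1 ≤ m) :
    ∑ i ∈ Finset.Icc 1 m,
        (r ^ (m - i) * (r - 1) / (r ^ m - 1)) *
        ((r + 1) / (r - 1) *
          ((m : ℝ) + i - 1 - 2 / (r - 1) + 2 * m / (r ^ m - 1)
            - (m + 1) * (r ^ i - 1) / (r ^ (m + 1) - 1)))
      = (r + 1) / (r - 1) *
          ((m : ℝ) - 1 / (r - 1) - (m : ℝ) ^ 2 / (r ^ m - 1)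
            + ((m : ℝ) + 1) ^ 2 / (r ^ (m + 1) - 1)) := by
  have hs : r - 1 ≠ 0 := sub_ne_zero.mpr hr1
  have hA : r ^ m - 1 ≠ 0 := sub_ne_zero.mpr (pow_ne_one r hr hr1 m (by omega))
  have hB : r ^ (m+1) - 1 ≠ 0 := sub_ne_zero.mpr (pow_ne_one r hr hr1 (m+1) (by omega))
  set a : ℝ := (r+1)/(r^m-1) * ((m:ℝ) - 1 - 2/(r-1) + 2*m/(r^m-1) + (m+1)/(r^(m+1)-1)) with ha
  set b : ℝ := (r+1)/(r^m-1) with hb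
  set c : ℝ := -((r+1)/(r^m-1)) * ((m+1)/(r^(m+1)-1)) with hc
  have key : ∀ i ∈ Icc 1 m,
      (r ^ (m - i) * (r - 1) / (r ^ m - 1)) *
        ((r + 1) / (r - 1) *
          ((m : ℝ) + i - 1 - 2 / (r - 1) + 2 * m / (r ^ m - 1)
            - (m + 1) * (r ^ i - 1) / (r ^ (m + 1) - 1)))
      = a * r ^ (m-i) + b * ((i:ℝ) * r ^ (m-i)) + c * (r ^ (m-i) * r ^ i) := by
    intro i hi
    rw [ha, hb, hc]
    field_simp
    ring
  rw [Finset.sum_congr rfl key]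
  rw [Finset.sum_add_distrib, Finset.sum_add_distrib, ← Finset.mul_sum,
    ← Finset.mul_sum, ← Finset.mul_sum]
  have hmm : ∑ i ∈ Icc 1 m, r ^ (m-i) * r ^ i = m * r ^ m := by
    have h : ∀ i ∈ Icc 1 m, r ^ (m-i) * r ^ i = r ^ m := by
      intro i hi
      simp only [Finset.mem_Icc] at hi
      rw [← pow_add, Nat.sub_add_cancel hi.2]
    rw [Finset.sum_congr rfl h, Finset.sum_const, Nat.card_Icc, nsmul_eq_mul]
    norm_num
  have h0 : ∑ i ∈ Icc 1 m, r ^ (m-i) = (r ^ m - 1)/(r - 1) :=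
    (eq_div_iff hs).mpr (by linear_combination S0_eq r m)
  have h1 : ∑ i ∈ Icc 1 m, (i:ℝ) * r ^ (m-i)
      = (r ^ (m+1) - (m+1) * r + m)/(r - 1)^2 :=
    (eq_div_iff (pow_ne_zero 2 hs)).mpr (by linear_combination S1_eq r m)
  rw [hmm, h0, h1, ha, hb, hc]
  have hpow : r ^ (m+1) = r ^ m * r := pow_succ r m
  field_simp
  ring
end

section
/- For r ≠ 1, r > 0, and m ≥ 1, the identity ∑_{i=1}^{m} [r^{m-i}(r-1)/(r^m-1)]·((r+1)/(r-1))·(i - (m+1)·(r^i-1)/(r^{m+1}-1)) = ((r+1)/(r-1))·[r/(r-1) - m(m+2)/(r^m-1) + (m+1)²/(r^{m+1}-1)] holds. -/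
open Finset

private lemma sumB (r : ℝ) (m : ℕ) :
    (r - 1) * ∑ i ∈ Finset.Icc 1 m, r ^ (m - i) = r ^ m - 1 := by
  induction m with
  | zero => simp
  | succ n ih =>
    rw [Finset.sum_Icc_succ_top (by omega)]
    have h : ∀ i ∈ Finset.Icc 1 n, r ^ (n + 1 - i) = r * r ^ (n - i) := by
      intro i hi
      simp only [Finset.mem_Icc] at hi
      rw [show n + 1 - i = (n - i) + 1 by omega, pow_succ]
      ring
    rw [Finset.sum_congr rfl h, ← Finset.mul_sum]
    simp only [Nat.sub_self, pow_zero]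
    linear_combination r * ih

private lemma sumA (r : ℝ) (m : ℕ) :
    (r - 1) ^ 2 * ∑ i ∈ Finset.Icc 1 m, (i : ℝ) * r ^ (m - i)
      = r ^ (m + 1) - ((m : ℝ) + 1) * r + m := by
  induction m with
  | zero => simp
  | succ n ih =>
    rw [Finset.sum_Icc_succ_top (by omega)]
    have h : ∀ i ∈ Finset.Icc 1 n, (i : ℝ) * r ^ (n + 1 - i) = r * ((i : ℝ) * r ^ (n - i)) := by
      intro i hi
      simp only [Finset.mem_Icc] at hi
      rw [show n + 1 - i = (n - i) + 1 by omega, pow_succ]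
      ring
    rw [Finset.sum_congr rfl h, ← Finset.mul_sum]
    simp only [Nat.sub_self, pow_zero, mul_one]
    push_cast
    linear_combination r * ih

theorem stmt_19 (r : ℝ) (hr : 0 < r) (hr1 : r ≠ 1) (m : ℕ) (hm : 1 ≤ m) :
    ∑ i ∈ Finset.Icc 1 m,
        (r ^ (m - i) * (r - 1) / (r ^ m - 1)) *
        ((r + 1) / (r - 1) *
          ((i : ℝ) - ((m : ℝ) + 1) * (r ^ i - 1) / (r ^ (m + 1) - 1)))
      = (r + 1) / (r - 1) *
          (r / (r - 1) - (m : ℝ) * ((m : ℝ) + 2) / (r ^ m - 1)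
            + ((m : ℝ) + 1) ^ 2 / (r ^ (m + 1) - 1)) := by
  have hr3 : r - 1 ≠ 0 := sub_ne_zero.mpr hr1
  have hpow : ∀ n : ℕ, 1 ≤ n → r ^ n - 1 ≠ 0 := by
    intro n hn
    rcases lt_or_gt_of_ne hr1 with h | h
    · have : r ^ n < 1 := pow_lt_one₀ hr.le h (by omega)
      linarith
    · have : 1 < r ^ n := one_lt_pow₀ h (by omega)
      linarith
  have h1 : r ^ m - 1 ≠ 0 := hpow m hm
  have h2 : r ^ (m + 1) - 1 ≠ 0 := hpow (m + 1) (by omega)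
  set c1 : ℝ := (r + 1) / (r ^ m - 1) with hc1
  set c2 : ℝ := -((r + 1) * ((m : ℝ) + 1)) / ((r ^ m - 1) * (r ^ (m + 1) - 1)) with hc2
  set c3 : ℝ := ((r + 1) * ((m : ℝ) + 1)) / ((r ^ m - 1) * (r ^ (m + 1) - 1)) with hc3
  have key : ∀ i ∈ Finset.Icc 1 m,
      (r ^ (m - i) * (r - 1) / (r ^ m - 1)) *
        ((r + 1) / (r - 1) *
          ((i : ℝ) - ((m : ℝ) + 1) * (r ^ i - 1) / (r ^ (m + 1) - 1)))
      = c1 * ((i : ℝ) * r ^ (m - i)) + c2 * (r ^ (m - i) * r ^ i) + c3 * r ^ (m - i) := by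
    intro i hi
    rw [hc1, hc2, hc3]
    field_simp
    ring
  rw [Finset.sum_congr rfl key]
  have hC : ∀ i ∈ Finset.Icc 1 m, r ^ (m - i) * r ^ i = r ^ m := by
    intro i hi
    simp only [Finset.mem_Icc] at hi
    rw [← pow_add, Nat.sub_add_cancel hi.2]
  rw [Finset.sum_add_distrib, Finset.sum_add_distrib, ← Finset.mul_sum, ← Finset.mul_sum,
    ← Finset.mul_sum, Finset.sum_congr rfl hC, Finset.sum_const, Nat.card_Icc]
  have hA := sumA r m
  have hB := sumB r m
  have hAe : ∑ i ∈ Finset.Icc 1 m, (i : ℝ) * r ^ (m - i)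
      = (r ^ (m + 1) - ((m : ℝ) + 1) * r + m) / (r - 1) ^ 2 := by
    field_simp
    linarith [hA]
  have hBe : ∑ i ∈ Finset.Icc 1 m, r ^ (m - i) = (r ^ m - 1) / (r - 1) := by
    field_simp
    linarith [hB]
  rw [hAe, hBe, hc1, hc2, hc3]
  have hcard : ((m + 1 - 1 : ℕ) : ℝ) = (m : ℝ) := by push_cast; ring
  rw [Nat.add_sub_cancel, nsmul_eq_mul]
  field_simp
  ring
end
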